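/- Let A be a directed-complete generalized ultrametric semilattice with distance set P, let F : A → A be contracting, let a be a post-fixed point of F, and let g be a function from ordinals to A such that g(0) = a, g(α+1) = F(g(α)) ⊓ F(F(g(α))) for every ordinal α, and for every limit ordinal λ, g(λ) is a least upper bound of {g(β) : β < λ} in (A, ⊑). Then for every ordinal α: (1) g(α) ⊑ F(g(α)), and (2) for every ordinal β < α, g(β) ⊑ g(α). -/

import Mathlib

/-- A generalized ultrametric semilattice over a meet-semilattice `A`
(with induced order `a ⊑ b ↔ a ⊓ b = a`, i.e. the `≤` of `SemilatticeInf`)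
and a pointed partially ordered distance set `P` with least element `⊥`. -/
structure GUSemilattice (A : Type*) (P : Type*) [SemilatticeInf A] [PartialOrder P] [OrderBot P] where
  d : A → A → P
  d_eq_bot_iff : ∀ a₁ a₂ : A, d a₁ a₂ = ⊥ ↔ a₁ = a₂
  d_symm : ∀ a₁ a₂ : A, d a₁ a₂ = d a₂ a₁
  d_ultra : ∀ (a₁ a₂ a₃ : A) (p : P), d a₁ a₂ ≤ p → d a₂ a₃ ≤ p → d a₁ a₃ ≤ p
  inf_le_inf_of_d_le : ∀ a₁ a₂ a₃ : A, d a₁ a₂ ≤ d a₁ a₃ → a₁ ⊓ a₃ ≤ a₁ ⊓ a₂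
  d_inf_inf_le : ∀ a₁ a₂ a₃ : A, d (a₁ ⊓ a₂) (a₁ ⊓ a₃) ≤ d a₂ a₃

variable {A P : Type*} [SemilatticeInf A] [PartialOrder P] [OrderBot P]

/-- `F` is contracting. -/
def GUSemilattice.Contracting (S : GUSemilattice A P) (F : A → A) : Prop :=
  ∀ a₁ a₂ : A, S.d (F a₁) (F a₂) ≤ S.d a₁ a₂

/-- `F` is strictly contracting. -/
def GUSemilattice.StrictlyContracting (S : GUSemilattice A P) (F : A → A) : Prop :=
  ∀ a₁ a₂ : A, a₁ ≠ a₂ → S.d (F a₁) (F a₂) < S.d a₁ a₂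

/-- `F` is strictly contracting on orbits. -/
def GUSemilattice.StrictlyContractingOnOrbits (S : GUSemilattice A P) (F : A → A) : Prop :=
  ∀ a : A, a ≠ F a → S.d (F a) (F (F a)) < S.d a (F a)

/-- A ball in the generalized ultrametric space associated with `S`. -/
def GUSemilattice.IsBall (S : GUSemilattice A P) (B : Set A) : Prop :=
  ∃ (a : A) (p : P), B = {x : A | S.d x a ≤ p}

/-- Spherical completeness: every nonempty chain of balls has nonempty intersection. -/
def GUSemilattice.SphericallyComplete (S : GUSemilattice A P) : Prop :=
  ∀ C : Set (Set A), C.Nonempty → IsChain (· ⊆ ·) C → (∀ B ∈ C, S.IsBall B) → (⋂₀ C).Nonempty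

/-- Directed-completeness: every nonempty directed subset has a least upper bound. -/
def DirectedComplete (A : Type*) [Preorder A] : Prop :=
  ∀ D : Set A, D.Nonempty → DirectedOn (· ≤ ·) D → ∃ s : A, IsLUB D s

/-- Key lemma: if `b` is post-fixed and `b ≤ s`, then `b ≤ F s`. -/
lemma GUSemilattice.le_apply_of_le (S : GUSemilattice A P) {F : A → A}
    (hF : S.Contracting F) {b s : A} (hb : b ≤ F b) (hbs : b ≤ s) : b ≤ F s := by
  have h1 : S.d (b ⊓ F s) b ≤ S.d b s := by
    have h := S.d_inf_inf_le b (F s) (F b)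
    rw [inf_eq_left.mpr hb] at h
    calc S.d (b ⊓ F s) b ≤ S.d (F s) (F b) := h
      _ ≤ S.d s b := hF s b
      _ = S.d b s := S.d_symm s b
  have h2 : S.d b (b ⊓ F s) ≤ S.d b s := by rw [S.d_symm]; exact h1
  have h3 := S.inf_le_inf_of_d_le b (b ⊓ F s) s h2
  rw [inf_eq_left.mpr hbs] at h3
  exact h3.trans (inf_le_right.trans inf_le_right)

/-- If `b` is a post-fixed point, then so is `F b ⊓ F (F b)`. -/
lemma GUSemilattice.succ_postFixed (S : GUSemilattice A P) {F : A → A}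
    (hF : S.Contracting F) (b : A) :
    F b ⊓ F (F b) ≤ F (F b ⊓ F (F b)) := by
  have h1 : S.d (F b) (F b ⊓ F (F b)) ≤ S.d (F b) (F (F b)) := by
    have h := S.d_inf_inf_le (F b) (F b) (F (F b))
    rwa [inf_idem] at h
  have h2 : S.d (F (F b)) (F (F b ⊓ F (F b))) ≤ S.d (F (F b)) (F b) := by
    calc S.d (F (F b)) (F (F b ⊓ F (F b)))
        = S.d (F (F b ⊓ F (F b))) (F (F b)) := S.d_symm _ _
      _ ≤ S.d (F b ⊓ F (F b)) (F b) := hF _ _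
      _ = S.d (F b) (F b ⊓ F (F b)) := S.d_symm _ _
      _ ≤ S.d (F b) (F (F b)) := h1
      _ = S.d (F (F b)) (F b) := S.d_symm _ _
  have h3 := S.inf_le_inf_of_d_le (F (F b)) (F (F b ⊓ F (F b))) (F b) h2
  calc F b ⊓ F (F b) = F (F b) ⊓ F b := inf_comm _ _
    _ ≤ F (F b) ⊓ F (F b ⊓ F (F b)) := h3
    _ ≤ F (F b ⊓ F (F b)) := inf_le_right

theorem transfinite_iteration_postFixed_and_monotone
    (S : GUSemilattice A P) (hdc : DirectedComplete A)
    (F : A → A) (hF : S.Contracting F)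
    (a : A) (ha : a ≤ F a)
    (g : Ordinal → A)
    (hg0 : g 0 = a)
    (hgsucc : ∀ α : Ordinal, g (α + 1) = F (g α) ⊓ F (F (g α)))
    (hglim : ∀ l : Ordinal, Order.IsSuccLimit l → IsLUB (g '' Set.Iio l) (g l)) :
    ∀ α : Ordinal, g α ≤ F (g α) ∧ ∀ β : Ordinal, β < α → g β ≤ g α := by
  intro α
  induction α using Ordinal.induction with
  | h α IH =>
    rcases Ordinal.zero_or_succ_or_isSuccLimit α with h0 | ⟨γ, hγ⟩ | hlim
    · subst h0
      refine ⟨by rw [hg0]; exact ha, fun β hβ => absurd hβ (not_lt_of_ge (zero_le (a := β)))⟩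
    · have hγlt : γ < α := by rw [← hγ]; exact Order.lt_succ γ
      have hpf : g γ ≤ F (g γ) := (IH γ hγlt).1
      have hgs : g α = F (g γ) ⊓ F (F (g γ)) := by
        rw [← hγ, ← Ordinal.add_one_eq_succ]; exact hgsucc γ
      have hstep : g γ ≤ g α := by
        rw [hgs]
        exact le_inf hpf (S.le_apply_of_le hF hpf hpf)
      refine ⟨by rw [hgs]; exact S.succ_postFixed hF (g γ), fun β hβ => ?_⟩
      have hβγ : β ≤ γ := by
        rw [← hγ, Order.lt_succ_iff] at hβ; exact hβ
      rcases eq_or_lt_of_le hβγ with rfl | hlt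
      · exact hstep
      · exact ((IH γ hγlt).2 β hlt).trans hstep
    · have hlub := hglim α hlim
      have hmono : ∀ β : Ordinal, β < α → g β ≤ g α := fun β hβ =>
        hlub.1 ⟨β, hβ, rfl⟩
      refine ⟨?_, hmono⟩
      apply hlub.2
      rintro x ⟨β, hβ, rfl⟩
      exact S.le_apply_of_le hF (IH β hβ).1 (hmono β hβ)
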